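/- Let b be a multidegree in ℕ^n with support R ⊆ [n], and let Δ be a simplicial complex on [n]. Then the degree-b component of the i-th homology of the complex L(Δ) of free S = k[x_1,...,x_n]-modules (the cellular complex of Δ with variable x_j attached to vertex j) is isomorphic as a k-vector space to the reduced simplicial homology H̃_{i}(Δ_R; k). -/

import Mathlib

open Finset MvPolynomial

noncomputable section

/-- Characteristic vector of a subset of `[n]`. -/
def chi (n : ℕ) (F : Finset (Fin n)) : Fin n →₀ ℕ := ∑ x ∈ F, Finsupp.single x 1

/-- Incidence sign: `(-1)^{#{y ∈ G : y < x}}`. -/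
def sgn (n : ℕ) (G : Finset (Fin n)) (x : Fin n) : ℤ :=
  (-1) ^ (G.filter (fun y => y < x)).card

/-- Simplicial boundary operator with coefficients in `k`. -/
def bdk (n : ℕ) (k : Type) [Field k] (c : Finset (Fin n) → k) : Finset (Fin n) → k :=
  fun G => ∑ x ∈ Gᶜ, (sgn n G x) • c (insert x G)

/-- Boundary operator of the cellular complex `L(Δ)` over `S = k[x_1,…,x_n]`: the variable
`x_l` attached to the removed vertex multiplies the coefficient. -/
def bdS (n : ℕ) (k : Type) [Field k] (c : Finset (Fin n) → MvPolynomial (Fin n) k) :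
    Finset (Fin n) → MvPolynomial (Fin n) k :=
  fun G => ∑ x ∈ Gᶜ, (sgn n G x) • (X x * c (insert x G))

theorem bdk_add (n : ℕ) (k : Type) [Field k] (a b : Finset (Fin n) → k)
    (G : Finset (Fin n)) : bdk n k (a + b) G = bdk n k a G + bdk n k b G := by
  simp [bdk, smul_add, Finset.sum_add_distrib]

theorem bdk_smul (n : ℕ) (k : Type) [Field k] (r : k) (a : Finset (Fin n) → k)
    (G : Finset (Fin n)) : bdk n k (r • a) G = r • bdk n k a G := by
  simp only [bdk, Finset.mul_sum, smul_eq_mul, Pi.smul_apply, zsmul_eq_mul]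
  congr 1; funext x; ring

theorem bdk_zero (n : ℕ) (k : Type) [Field k] (G : Finset (Fin n)) :
    bdk n k (0 : Finset (Fin n) → k) G = 0 := by simp [bdk]

theorem bdS_add (n : ℕ) (k : Type) [Field k] (a b : Finset (Fin n) → MvPolynomial (Fin n) k)
    (G : Finset (Fin n)) : bdS n k (a + b) G = bdS n k a G + bdS n k b G := by
  simp [bdS, mul_add, smul_add, Finset.sum_add_distrib]

theorem bdS_smul (n : ℕ) (k : Type) [Field k] (r : k)
    (a : Finset (Fin n) → MvPolynomial (Fin n) k) (G : Finset (Fin n)) :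
    bdS n k (r • a) G = r • bdS n k a G := by
  simp only [bdS, Finset.smul_sum, Pi.smul_apply, zsmul_eq_mul]
  congr 1; funext x
  rw [Algebra.mul_smul_comm, Algebra.smul_def, Algebra.smul_def]
  ring

theorem bdS_zero (n : ℕ) (k : Type) [Field k] (G : Finset (Fin n)) :
    bdS n k (0 : Finset (Fin n) → MvPolynomial (Fin n) k) G = 0 := by simp [bdS]

/-- Cycles of the chain complex of the restriction `Δ_R` with coefficients in `k`,
in the chains indexed by faces of cardinality `p`. -/
def Zk (n : ℕ) (k : Type) [Field k] (Δ : Finset (Finset (Fin n))) (R : Finset (Fin n))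
    (p : ℕ) : Submodule k (Finset (Fin n) → k) where
  carrier := {c | (∀ F, c F ≠ 0 → F ∈ Δ ∧ F.card = p ∧ F ⊆ R) ∧
    ∀ G, bdk n k c G = 0}
  add_mem' := by
    rintro a b ⟨hsa, hca⟩ ⟨hsb, hcb⟩
    refine ⟨fun F h => ?_, fun G => by rw [bdk_add, hca G, hcb G, add_zero]⟩
    by_cases h1 : a F = 0
    · exact hsb F (by simpa [h1] using h)
    · exact hsa F h1
  zero_mem' := ⟨fun F h => absurd rfl h, fun G => bdk_zero n k G⟩
  smul_mem' := by
    rintro r a ⟨hsa, hca⟩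
    refine ⟨fun F h => hsa F fun h0 => h (by simp [h0]),
      fun G => by rw [bdk_smul, hca G, smul_zero]⟩

/-- Boundaries of the chain complex of `Δ_R` with coefficients in `k`. -/
def Bk (n : ℕ) (k : Type) [Field k] (Δ : Finset (Finset (Fin n))) (R : Finset (Fin n))
    (p : ℕ) : Submodule k (Finset (Fin n) → k) where
  carrier := {c | ∃ e : Finset (Fin n) → k,
    (∀ F, e F ≠ 0 → F ∈ Δ ∧ F.card = p + 1 ∧ F ⊆ R) ∧ ∀ G, bdk n k e G = c G}
  add_mem' := by
    rintro a b ⟨e1, hs1, he1⟩ ⟨e2, hs2, he2⟩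
    refine ⟨e1 + e2, fun F h => ?_, fun G => by rw [bdk_add, he1 G, he2 G]; rfl⟩
    by_cases h1 : e1 F = 0
    · exact hs2 F (by simpa [h1] using h)
    · exact hs1 F h1
  zero_mem' := ⟨0, fun F h => absurd rfl h, fun G => bdk_zero n k G⟩
  smul_mem' := by
    rintro r a ⟨e, hs, he⟩
    exact ⟨r • e, fun F h => hs F fun h0 => h (by simp [h0]),
      fun G => by rw [bdk_smul, he G]; rfl⟩

/-- The multidegree-`b` part of the cycles of `L(Δ)` in the chains indexed by faces of
cardinality `p`: each coefficient is a scalar multiple of the monomial `x^{b - χ_F}`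
(and vanishes unless `χ_F ≤ b`), and the `S`-boundary vanishes. -/
def ZS (n : ℕ) (k : Type) [Field k] (Δ : Finset (Finset (Fin n))) (b : Fin n →₀ ℕ)
    (p : ℕ) : Submodule k (Finset (Fin n) → MvPolynomial (Fin n) k) where
  carrier := {c |
    (∀ F, c F ≠ 0 → F ∈ Δ ∧ F.card = p ∧ chi n F ≤ b) ∧
    (∀ F, ∃ a : k, c F = monomial (b - chi n F) a) ∧
    ∀ G, bdS n k c G = 0}
  add_mem' := by
    rintro a b' ⟨hsa, hha, hca⟩ ⟨hsb, hhb, hcb⟩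
    refine ⟨fun F h => ?_, fun F => ?_, fun G => by rw [bdS_add, hca G, hcb G, add_zero]⟩
    · by_cases h1 : a F = 0
      · exact hsb F (by simpa [h1] using h)
      · exact hsa F h1
    · obtain ⟨a1, h1⟩ := hha F
      obtain ⟨a2, h2⟩ := hhb F
      exact ⟨a1 + a2, by simp [Pi.add_apply, h1, h2]⟩
  zero_mem' := ⟨fun F h => absurd rfl h, fun F => ⟨0, by simp⟩, fun G => bdS_zero n k G⟩
  smul_mem' := by
    rintro r a ⟨hsa, hha, hca⟩
    refine ⟨fun F h => hsa F fun h0 => h (by simp [h0]), fun F => ?_,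
      fun G => by rw [bdS_smul, hca G, smul_zero]⟩
    obtain ⟨a1, h1⟩ := hha F
    exact ⟨r * a1, by simp [Pi.smul_apply, h1, MvPolynomial.smul_monomial]⟩

/-- The multidegree-`b` part of the boundaries of `L(Δ)` in the chains indexed by faces of
cardinality `p`. -/
def BS (n : ℕ) (k : Type) [Field k] (Δ : Finset (Finset (Fin n))) (b : Fin n →₀ ℕ)
    (p : ℕ) : Submodule k (Finset (Fin n) → MvPolynomial (Fin n) k) where
  carrier := {c | ∃ e : Finset (Fin n) → MvPolynomial (Fin n) k,
    (∀ F, e F ≠ 0 → F ∈ Δ ∧ F.card = p + 1 ∧ chi n F ≤ b) ∧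
    (∀ F, ∃ a : k, e F = monomial (b - chi n F) a) ∧
    ∀ G, bdS n k e G = c G}
  add_mem' := by
    rintro a b' ⟨e1, hs1, hh1, he1⟩ ⟨e2, hs2, hh2, he2⟩
    refine ⟨e1 + e2, fun F h => ?_, fun F => ?_, fun G => by rw [bdS_add, he1 G, he2 G]; rfl⟩
    · by_cases h1 : e1 F = 0
      · exact hs2 F (by simpa [h1] using h)
      · exact hs1 F h1
    · obtain ⟨a1, h1⟩ := hh1 F
      obtain ⟨a2, h2⟩ := hh2 F
      exact ⟨a1 + a2, by simp [Pi.add_apply, h1, h2]⟩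
  zero_mem' := ⟨0, fun F h => absurd rfl h, fun F => ⟨0, by simp⟩, fun G => bdS_zero n k G⟩
  smul_mem' := by
    rintro r a ⟨e, hs, hh, he⟩
    refine ⟨r • e, fun F h => hs F fun h0 => h (by simp [h0]), fun F => ?_,
      fun G => by rw [bdS_smul, he G]; rfl⟩
    obtain ⟨a1, h1⟩ := hh F
    exact ⟨r * a1, by simp [Pi.smul_apply, h1, MvPolynomial.smul_monomial]⟩


lemma chi_apply' (n : ℕ) (F : Finset (Fin n)) (x : Fin n) :
    chi n F x = if x ∈ F then 1 else 0 := by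
  classical
  simp only [chi, Finset.sum_apply']
  by_cases h : x ∈ F
  · rw [Finset.sum_eq_single x (fun b _ hb => Finsupp.single_eq_of_ne' hb) (fun h' => absurd h h')]
    simp [h]
  · rw [Finset.sum_eq_zero (fun b hb => Finsupp.single_eq_of_ne' (by rintro rfl; exact h hb))]
    simp [h]

lemma chi_le_iff (n : ℕ) (F : Finset (Fin n)) (b : Fin n →₀ ℕ) :
    chi n F ≤ b ↔ F ⊆ b.support := by
  rw [Finsupp.le_def]
  constructor
  · intro h x hx
    have := h x
    rw [chi_apply', if_pos hx] at this
    rw [Finsupp.mem_support_iff]; omega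
  · intro h x
    rw [chi_apply']
    split
    · next hx => have := h hx; rw [Finsupp.mem_support_iff] at this; omega
    · omega

lemma chi_insert (n : ℕ) (G : Finset (Fin n)) (x : Fin n) (hx : x ∉ G) :
    chi n (insert x G) = chi n G + Finsupp.single x 1 := by
  rw [chi, Finset.sum_insert hx, add_comm]; rfl

lemma sub_key (n : ℕ) (b : Fin n →₀ ℕ) (G : Finset (Fin n)) (x : Fin n) (hx : x ∉ G)
    (h : chi n (insert x G) ≤ b) :
    Finsupp.single x 1 + (b - chi n (insert x G)) = b - chi n G := by
  rw [chi_insert n G x hx] at h ⊢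
  rw [tsub_add_eq_tsub_tsub, add_comm, tsub_add_cancel_of_le]
  exact le_tsub_of_add_le_left h

lemma bdS_monomial (n : ℕ) (k : Type) [Field k] (b : Fin n →₀ ℕ) (a : Finset (Fin n) → k)
    (ha : ∀ F, a F ≠ 0 → chi n F ≤ b) (G : Finset (Fin n)) :
    bdS n k (fun F => monomial (b - chi n F) (a F)) G
      = monomial (b - chi n G) (bdk n k a G) := by
  rw [bdS, bdk, map_sum]
  refine Finset.sum_congr rfl (fun x hx => ?_)
  have hxG : x ∉ G := by simpa using hx
  by_cases h0 : a (insert x G) = 0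
  · simp [h0]
  · have hle := ha _ h0
    rw [show (X x : MvPolynomial (Fin n) k) = monomial (Finsupp.single x 1) 1 from rfl,
      monomial_mul, one_mul, sub_key n b G x hxG hle]
    rw [smul_monomial]

lemma rep_eq (n : ℕ) (k : Type) [Field k] (b : Fin n →₀ ℕ)
    (c : Finset (Fin n) → MvPolynomial (Fin n) k) (F : Finset (Fin n))
    (h : ∃ a : k, c F = monomial (b - chi n F) a) :
    c F = monomial (b - chi n F) (coeff (b - chi n F) (c F)) := by
  obtain ⟨a, ha⟩ := h
  rw [ha, coeff_monomial, if_pos rfl]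

/-- The degree-`b` "coefficient extraction" map. -/
def TkL (n : ℕ) (k : Type) [Field k] (b : Fin n →₀ ℕ) :
    (Finset (Fin n) → MvPolynomial (Fin n) k) →ₗ[k] (Finset (Fin n) → k) where
  toFun c := fun F => coeff (b - chi n F) (c F)
  map_add' := by intros; funext F; simp
  map_smul' := by intros; funext F; simp

/-- The "multiplication by the monomial `x^{b-χ_F}`" map. -/
def TSL (n : ℕ) (k : Type) [Field k] (b : Fin n →₀ ℕ) :
    (Finset (Fin n) → k) →ₗ[k] (Finset (Fin n) → MvPolynomial (Fin n) k) where
  toFun c := fun F => monomial (b - chi n F) (c F)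
  map_add' := by intros; funext F; simp
  map_smul' := by intros; funext F; simp [smul_monomial]

lemma Tk_mem (n : ℕ) (k : Type) [Field k] (Δ : Finset (Finset (Fin n))) (b : Fin n →₀ ℕ)
    (p : ℕ) (c : Finset (Fin n) → MvPolynomial (Fin n) k) (hc : c ∈ ZS n k Δ b p) :
    TkL n k b c ∈ Zk n k Δ b.support p := by
  obtain ⟨hs, hh, hz⟩ := hc
  have hrep : ∀ F, c F = monomial (b - chi n F) (TkL n k b c F) :=
    fun F => rep_eq n k b c F (hh F)
  have ha : ∀ F, TkL n k b c F ≠ 0 → chi n F ≤ b := by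
    intro F h
    refine (hs F (fun h0 => h ?_)).2.2
    show coeff (b - chi n F) (c F) = 0
    rw [h0]; simp
  constructor
  · intro F h
    have hcF : c F ≠ 0 := fun h0 => h (by show coeff (b - chi n F) (c F) = 0; rw [h0]; simp)
    obtain ⟨h1, h2, h3⟩ := hs F hcF
    exact ⟨h1, h2, (chi_le_iff n F b).mp h3⟩
  · intro G
    have key := bdS_monomial n k b (TkL n k b c) ha G
    have : (fun F => monomial (b - chi n F) (TkL n k b c F)) = c := funext fun F => (hrep F).symm
    rw [this, hz G] at key
    have := congrArg (coeff (b - chi n G)) key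
    rw [coeff_monomial, if_pos rfl] at this
    simpa using this.symm

lemma TS_mem (n : ℕ) (k : Type) [Field k] (Δ : Finset (Finset (Fin n))) (b : Fin n →₀ ℕ)
    (p : ℕ) (c : Finset (Fin n) → k) (hc : c ∈ Zk n k Δ b.support p) :
    TSL n k b c ∈ ZS n k Δ b p := by
  obtain ⟨hs, hz⟩ := hc
  have ha : ∀ F, c F ≠ 0 → chi n F ≤ b := fun F h => (chi_le_iff n F b).mpr (hs F h).2.2
  refine ⟨?_, fun F => ⟨c F, rfl⟩, ?_⟩
  · intro F h
    have hcF : c F ≠ 0 := fun h0 => h (by show monomial (b - chi n F) (c F) = 0; rw [h0]; simp)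
    obtain ⟨h1, h2, h3⟩ := hs F hcF
    exact ⟨h1, h2, ha F hcF⟩
  · intro G
    have key := bdS_monomial n k b c ha G
    rw [hz G] at key
    exact (by simpa using key : bdS n k (fun F => monomial (b - chi n F) (c F)) G = 0)

/-- The linear equivalence between the degree-`b` cycles of `L(Δ)` and the cycles of
`Δ_{supp b}` with coefficients in `k`. -/
def eqv (n : ℕ) (k : Type) [Field k] (Δ : Finset (Finset (Fin n))) (b : Fin n →₀ ℕ)
    (p : ℕ) : (ZS n k Δ b p) ≃ₗ[k] (Zk n k Δ b.support p) where
  toFun c := ⟨TkL n k b c.1, Tk_mem n k Δ b p c.1 c.2⟩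
  map_add' c d := Subtype.ext (by simp [map_add])
  map_smul' r c := Subtype.ext (by simp [map_smul])
  invFun c := ⟨TSL n k b c.1, TS_mem n k Δ b p c.1 c.2⟩
  left_inv c := Subtype.ext (funext fun F => (rep_eq n k b c.1 F (c.2.2.1 F)).symm)
  right_inv c := Subtype.ext (funext fun F => by
    show coeff (b - chi n F) (monomial (b - chi n F) (c.1 F)) = c.1 F
    rw [coeff_monomial, if_pos rfl])

lemma BS_iff (n : ℕ) (k : Type) [Field k] (Δ : Finset (Finset (Fin n))) (b : Fin n →₀ ℕ)
    (p : ℕ) (c : Finset (Fin n) → MvPolynomial (Fin n) k)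
    (hrep : ∀ F, ∃ a : k, c F = monomial (b - chi n F) a) :
    c ∈ BS n k Δ b p ↔ TkL n k b c ∈ Bk n k Δ b.support p := by
  constructor
  · rintro ⟨e, hs, hh, he⟩
    refine ⟨TkL n k b e, ?_, ?_⟩
    · intro F h
      have heF : e F ≠ 0 := fun h0 => h (by show coeff (b - chi n F) (e F) = 0; rw [h0]; simp)
      obtain ⟨h1, h2, h3⟩ := hs F heF
      exact ⟨h1, h2, (chi_le_iff n F b).mp h3⟩
    · intro G
      have ha : ∀ F, TkL n k b e F ≠ 0 → chi n F ≤ b := by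
        intro F h
        refine (hs F (fun h0 => h ?_)).2.2
        show coeff (b - chi n F) (e F) = 0
        rw [h0]; simp
      have key := bdS_monomial n k b (TkL n k b e) ha G
      have he' : (fun F => monomial (b - chi n F) (TkL n k b e F)) = e :=
        funext fun F => (rep_eq n k b e F (hh F)).symm
      rw [he', he G] at key
      have := congrArg (coeff (b - chi n G)) key
      rw [coeff_monomial, if_pos rfl] at this
      exact this.symm
  · rintro ⟨a, hs, ha⟩
    have hle : ∀ F, a F ≠ 0 → chi n F ≤ b := fun F h => (chi_le_iff n F b).mpr (hs F h).2.2
    refine ⟨TSL n k b a, ?_, fun F => ⟨a F, rfl⟩, ?_⟩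
    · intro F h
      have haF : a F ≠ 0 := fun h0 => h (by show monomial (b - chi n F) (a F) = 0; rw [h0]; simp)
      obtain ⟨h1, h2, h3⟩ := hs F haF
      exact ⟨h1, h2, hle F haF⟩
    · intro G
      have key := bdS_monomial n k b a hle G
      rw [ha G] at key
      rw [show bdS n k (TSL n k b a) G = bdS n k (fun F => monomial (b - chi n F) (a F)) G
        from rfl, key]
      exact (rep_eq n k b c G (hrep G)).symm

/-- For a multidegree `b ∈ ℕ^n` with support `R`, the degree-`b` component of the `i`-th
homology of the cellular complex `L(Δ)` over `S = k[x_1,…,x_n]` is isomorphic, as a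
`k`-vector space, to the reduced simplicial homology `H̃_i(Δ_R; k)` (chains in homological
degree `i` are indexed by faces of cardinality `i + 1`). -/
theorem stmt_10 (n : ℕ) (k : Type) [Field k] (Δ : Finset (Finset (Fin n)))
    (hΔ : ∀ F ∈ Δ, ∀ G ⊆ F, G ∈ Δ)
    (b : Fin n →₀ ℕ) (i : ℕ) :
    Nonempty (
      ((ZS n k Δ b (i + 1)) ⧸ ((BS n k Δ b (i + 1)).comap (ZS n k Δ b (i + 1)).subtype))
        ≃ₗ[k]
      ((Zk n k Δ b.support (i + 1)) ⧸
        ((Bk n k Δ b.support (i + 1)).comap (Zk n k Δ b.support (i + 1)).subtype))) := by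
  refine ⟨Submodule.Quotient.equiv _ _ (eqv n k Δ b (i + 1)) ?_⟩
  ext x
  simp only [Submodule.mem_map, Submodule.mem_comap, Submodule.coe_subtype]
  constructor
  · rintro ⟨y, hy, rfl⟩
    exact (BS_iff n k Δ b (i + 1) y.1 y.2.2.1).mp hy
  · intro hx
    refine ⟨(eqv n k Δ b (i + 1)).symm x, ?_, (eqv n k Δ b (i + 1)).apply_symm_apply x⟩
    have hTk : TkL n k b (TSL n k b x.1) = x.1 := funext fun F => by
      show coeff (b - chi n F) (monomial (b - chi n F) (x.1 F)) = x.1 F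
      rw [coeff_monomial, if_pos rfl]
    exact (BS_iff n k Δ b (i + 1) (TSL n k b x.1) (fun F => ⟨x.1 F, rfl⟩)).mpr
      (by rw [hTk]; exact hx)
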